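/- A presheaf Z on the theory Θ_T of a monad with arities (Θ₀, i₀, 𝒜, T) lies in the essential image of the nerve functor N_T : T-Alg → [Θ_Tᵒᵖ, Set] if and only if Z satisfies the Segal condition, i.e., the restriction res_j(Z) = Z∘j along the bijective-on-objects functor j : Θ₀ → Θ_T lies in the essential image of the dense-nerve functor hom_𝒜(i₀(-), -) : 𝒜 → [Θ₀ᵒᵖ, Set]. -/

import Mathlib

open CategoryTheory CategoryTheory.Limits

universe v u₁ u₂

variable {Θ₀ : Type u₁} [Category.{v} Θ₀] {A : Type u₂} [Category.{v} A]

/-- The nerve functor induced by `i : Θ₀ ⥤ 𝒜`, `a ↦ hom_𝒜(i(-), a)`. -/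
noncomputable def nerveOf (i : Θ₀ ⥤ A) : A ⥤ Θ₀ᵒᵖ ⥤ Type v :=
  yoneda ⋙ (Functor.whiskeringLeft _ _ (Type v)).obj i.op

/-- `i` is dense when the induced nerve is fully faithful. -/
def IsDenseF (i : Θ₀ ⥤ A) : Prop :=
  (nerveOf i).Full ∧ (nerveOf i).Faithful

/-- The theory `Θ_T` of a monad `T` relative to arities `i₀ : Θ₀ ⥤ 𝒜`: the
(bo,ff)-factorization of the free-algebra functor composed with `i₀`. -/
def TheoryCat (i₀ : Θ₀ ⥤ A) (T : Monad A) :=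
  InducedCategory T.Algebra (fun θ => T.free.obj (i₀.obj θ))

instance (i₀ : Θ₀ ⥤ A) (T : Monad A) : Category (TheoryCat i₀ T) :=
  inferInstanceAs (Category (InducedCategory T.Algebra (fun θ => T.free.obj (i₀.obj θ))))

/-- The bijective-on-objects part `j : Θ₀ ⥤ Θ_T` of the factorization. -/
def theoryJ (i₀ : Θ₀ ⥤ A) (T : Monad A) : Θ₀ ⥤ TheoryCat i₀ T where
  obj θ := θ
  map f := InducedCategory.homMk (T.free.map (i₀.map f))

/-- The fully faithful part `i : Θ_T ⥤ T-Alg` of the factorization, and the nerve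
`N_T : T-Alg ⥤ [Θ_Tᵒᵖ, Set]`. -/
noncomputable def theoryNerve (i₀ : Θ₀ ⥤ A) (T : Monad A) :
    T.Algebra ⥤ (TheoryCat i₀ T)ᵒᵖ ⥤ Type v :=
  yoneda ⋙ (Functor.whiskeringLeft _ _ (Type v)).obj (inducedFunctor _).op

/-- Restriction along `j`, `res_j : [Θ_Tᵒᵖ, Set] ⥤ [Θ₀ᵒᵖ, Set]`. -/
def theoryRes (i₀ : Θ₀ ⥤ A) (T : Monad A) :
    ((TheoryCat i₀ T)ᵒᵖ ⥤ Type v) ⥤ Θ₀ᵒᵖ ⥤ Type v :=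
  (Functor.whiskeringLeft _ _ (Type v)).obj (theoryJ i₀ T).op

section Aux
variable (i₀ : Θ₀ ⥤ A) (T : Monad A)

def toTheory (θ : Θ₀) : TheoryCat i₀ T := θ

@[simp] lemma nerveOf_obj_obj (b : A) (θ : Θ₀ᵒᵖ) :
    ((nerveOf i₀).obj b).obj θ = (i₀.obj θ.unop ⟶ b) := rfl

@[simp] lemma nerveOf_obj_map (b : A) {θ' θ : Θ₀ᵒᵖ} (w : θ' ⟶ θ) (u : i₀.obj θ'.unop ⟶ b) :
    ((nerveOf i₀).obj b).map w u = i₀.map w.unop ≫ u := rfl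

@[simp] lemma nerveOf_map_app {b c : A} (m : b ⟶ c) (θ : Θ₀ᵒᵖ) (u : i₀.obj θ.unop ⟶ b) :
    ((nerveOf i₀).map m).app θ u = u ≫ m := rfl

def extHom {θ' θ : Θ₀} (g : i₀.obj θ' ⟶ T.obj (i₀.obj θ)) :
    toTheory i₀ T θ' ⟶ toTheory i₀ T θ := InducedCategory.homMk
  { f := T.map g ≫ T.μ.app (i₀.obj θ)
    h := by
      show T.map (T.map g ≫ T.μ.app (i₀.obj θ)) ≫ T.μ.app (i₀.obj θ)
        = T.μ.app (i₀.obj θ') ≫ (T.map g ≫ T.μ.app (i₀.obj θ))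
      rw [Functor.map_comp, Category.assoc, T.assoc]
      exact T.μ.naturality_assoc g (T.μ.app (i₀.obj θ)) }

@[simp] lemma extHom_f {θ' θ : Θ₀} (g : i₀.obj θ' ⟶ T.obj (i₀.obj θ)) :
    (InducedCategory.Hom.hom (extHom i₀ T g)).f = T.map g ≫ T.μ.app (i₀.obj θ) := rfl

@[simp] lemma theory_comp_f {x y z : TheoryCat i₀ T} (u : x ⟶ y)
    (v : y ⟶ z) : (InducedCategory.Hom.hom (u ≫ v)).f = (InducedCategory.Hom.hom u).f ≫ (InducedCategory.Hom.hom v).f := rfl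

@[simp] lemma theory_id_f (θ : Θ₀) : (InducedCategory.Hom.hom (𝟙 (toTheory i₀ T θ) : _)).f = 𝟙 (T.obj (i₀.obj θ)) := rfl

@[simp] lemma theoryJ_map_f {θ' θ : Θ₀} (w : θ' ⟶ θ) :
    (InducedCategory.Hom.hom ((theoryJ i₀ T).map w)).f = T.map (i₀.map w) := rfl

lemma theory_hom_ext {x y : Θ₀} (u v : toTheory i₀ T x ⟶ toTheory i₀ T y)
    (h : (InducedCategory.Hom.hom u).f = (InducedCategory.Hom.hom v).f) : u = v :=
  InducedCategory.hom_ext (Monad.Algebra.Hom.ext h)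


lemma extHom_natl {θ'' θ' θ : Θ₀} (w : θ'' ⟶ θ') (g : i₀.obj θ' ⟶ T.obj (i₀.obj θ)) :
    extHom i₀ T (i₀.map w ≫ g) = (theoryJ i₀ T).map w ≫ extHom i₀ T g := by
  apply theory_hom_ext
  show T.map (i₀.map w ≫ g) ≫ T.μ.app (i₀.obj θ) = T.map (i₀.map w) ≫ T.map g ≫ T.μ.app (i₀.obj θ)
  simp [Functor.map_comp, Category.assoc]

lemma extHom_natr {θ' θ θ₂ : Θ₀} (g : i₀.obj θ' ⟶ T.obj (i₀.obj θ)) (w : θ ⟶ θ₂) :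
    extHom i₀ T (g ≫ T.map (i₀.map w)) = extHom i₀ T g ≫ (theoryJ i₀ T).map w := by
  apply theory_hom_ext
  show T.map (g ≫ T.map (i₀.map w)) ≫ T.μ.app (i₀.obj θ₂)
    = (T.map g ≫ T.μ.app (i₀.obj θ)) ≫ T.map (i₀.map w)
  simp only [extHom_f, theory_comp_f, theoryJ_map_f, Functor.map_comp, Category.assoc]
  rw [← T.μ.naturality (i₀.map w)]
  rfl

lemma extHom_eta (θ : Θ₀) : extHom i₀ T (T.η.app (i₀.obj θ)) = 𝟙 (toTheory i₀ T θ) := by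
  apply theory_hom_ext
  show T.map (T.η.app (i₀.obj θ)) ≫ T.μ.app (i₀.obj θ) = 𝟙 _
  simp

lemma extHom_comp {θ' θ θ'' : Θ₀} (g : i₀.obj θ' ⟶ T.obj (i₀.obj θ))
    (g' : i₀.obj θ ⟶ T.obj (i₀.obj θ'')) :
    extHom i₀ T (g ≫ T.map g' ≫ T.μ.app (i₀.obj θ'')) = extHom i₀ T g ≫ extHom i₀ T g' := by
  apply theory_hom_ext
  show T.map (g ≫ T.map g' ≫ T.μ.app (i₀.obj θ'')) ≫ T.μ.app (i₀.obj θ'')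
    = (T.map g ≫ T.μ.app (i₀.obj θ)) ≫ T.map g' ≫ T.μ.app (i₀.obj θ'')
  simp only [extHom_f, theory_comp_f, Functor.map_comp, Category.assoc]
  rw [T.assoc]
  slice_lhs 2 3 => rw [show T.map (T.map g') ≫ T.μ.app (T.obj (i₀.obj θ'')) =
    T.μ.app (i₀.obj θ) ≫ T.map g' from T.μ.naturality g']
  simp [Category.assoc]

lemma extHom_eq_self {θ' θ : Θ₀} (G : toTheory i₀ T θ' ⟶ toTheory i₀ T θ) :
    extHom i₀ T (T.η.app (i₀.obj θ') ≫ (InducedCategory.Hom.hom G).f) = G := by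
  apply theory_hom_ext
  have hG : T.map (InducedCategory.Hom.hom G).f ≫ T.μ.app (i₀.obj θ) = T.μ.app (i₀.obj θ') ≫ (InducedCategory.Hom.hom G).f :=
    (InducedCategory.Hom.hom G).h
  have key : T.map (T.η.app (i₀.obj θ')) ≫ T.map (InducedCategory.Hom.hom G).f ≫ T.μ.app (i₀.obj θ) =
      (InducedCategory.Hom.hom G).f := by
    erw [hG, ← Category.assoc, T.right_unit, Category.id_comp]
  show T.map (T.η.app (i₀.obj θ') ≫ (InducedCategory.Hom.hom G).f) ≫ T.μ.app (i₀.obj θ)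
    = (InducedCategory.Hom.hom G).f
  exact (congrArg (fun m => m ≫ T.μ.app (i₀.obj θ))
    (T.map_comp (T.η.app (i₀.obj θ')) (InducedCategory.Hom.hom G).f)).trans
    ((Category.assoc _ _ _).trans key)


/-- The power functor `x ↦ Q^{Hom(x,a)}`, used to extract pointwise information from the
global universal property of the left Kan extension. -/
@[simps]
def powerG (a : A) (Q : Θ₀ᵒᵖ ⥤ Type v) : A ⥤ Θ₀ᵒᵖ ⥤ Type v where
  obj x :=
    { obj := fun θ' => (x ⟶ a) → Q.obj θ'
      map := fun w => ↾(fun F f => Q.map w (F f))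
      map_id := by intro θ'; apply ConcreteCategory.hom_ext; intro F; funext f; simp
      map_comp := by
        intro θ' θ'' θ''' w w'; apply ConcreteCategory.hom_ext; intro F; funext f; simp }
  map w :=
    { app := fun θ' => ↾(fun F f' => F (w ≫ f'))
      naturality := by intro θ' θ'' u; apply ConcreteCategory.hom_ext; intro F; rfl }
  map_id := by
    intro x; apply NatTrans.ext; funext θ'; apply ConcreteCategory.hom_ext; intro F; funext f
    simp
  map_comp := by intro x y z u v; apply NatTrans.ext; funext θ'; apply ConcreteCategory.hom_ext
                 intro F; funext f
                 simp [Category.assoc]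

section Lan

variable (h₂ : Functor.IsLeftKanExtension (T.toFunctor ⋙ nerveOf i₀)
      (𝟙 (i₀ ⋙ T.toFunctor ⋙ nerveOf i₀)))

/-- The cocone data. -/
structure ConeData (a : A) (Q : Θ₀ᵒᵖ ⥤ Type v) where
  s : ∀ (θ : Θ₀) (f : i₀.obj θ ⟶ a), ((nerveOf i₀).obj (T.obj (i₀.obj θ)) ⟶ Q)
  hs : ∀ {θ' θ : Θ₀} (w : θ' ⟶ θ) (f : i₀.obj θ ⟶ a),
      (nerveOf i₀).map (T.map (i₀.map w)) ≫ s θ f = s θ' (i₀.map w ≫ f)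

variable {i₀ T}

/-- The transformation `i₀ ⋙ T ⋙ ν ⟶ i₀ ⋙ powerG a Q` induced by cocone data. -/
noncomputable def ConeData.beta {a : A} {Q : Θ₀ᵒᵖ ⥤ Type v} (c : ConeData i₀ T a Q) :
    (i₀ ⋙ T.toFunctor ⋙ nerveOf i₀) ⟶ i₀ ⋙ powerG a Q where
  app θ :=
    { app := fun θ' => ↾(fun g f => (c.s θ f).app θ' g)
      naturality := by
        intro θ' θ'' w
        apply ConcreteCategory.hom_ext; intro g
        funext f
        have := NatTrans.naturality_apply (c.s θ f) w g
        exact this }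
  naturality := by
    intro θ θ₂ w
    apply NatTrans.ext
    funext θ'; apply ConcreteCategory.hom_ext; intro g
    funext f
    have := types_congr_hom (congr_app (c.hs w f) θ') g
    exact this



/-- The induced natural transformation `T ⋙ ν ⟶ powerG a Q`. -/
noncomputable def ConeData.sigma
    (h₂ : Functor.IsLeftKanExtension (T.toFunctor ⋙ nerveOf i₀)
      (𝟙 (i₀ ⋙ T.toFunctor ⋙ nerveOf i₀)))
    {a : A} {Q : Θ₀ᵒᵖ ⥤ Type v} (c : ConeData i₀ T a Q) :
    (T.toFunctor ⋙ nerveOf i₀) ⟶ powerG a Q :=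
  haveI := h₂
  (T.toFunctor ⋙ nerveOf i₀).descOfIsLeftKanExtension
    (𝟙 (i₀ ⋙ T.toFunctor ⋙ nerveOf i₀)) (powerG a Q) c.beta

lemma ConeData.sigma_app
    (h₂ : Functor.IsLeftKanExtension (T.toFunctor ⋙ nerveOf i₀)
      (𝟙 (i₀ ⋙ T.toFunctor ⋙ nerveOf i₀)))
    {a : A} {Q : Θ₀ᵒᵖ ⥤ Type v} (c : ConeData i₀ T a Q) (θ : Θ₀) :
    (c.sigma h₂).app (i₀.obj θ) = c.beta.app θ := by
  haveI := h₂
  have := (T.toFunctor ⋙ nerveOf i₀).descOfIsLeftKanExtension_fac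
    (𝟙 (i₀ ⋙ T.toFunctor ⋙ nerveOf i₀)) (powerG a Q) c.beta
  rw [Category.id_comp] at this
  exact congr_app this θ

/-- Descent map out of `ν(Ta)` from cocone data, via the global universal property. -/
noncomputable def ConeData.desc
    (h₂ : Functor.IsLeftKanExtension (T.toFunctor ⋙ nerveOf i₀)
      (𝟙 (i₀ ⋙ T.toFunctor ⋙ nerveOf i₀)))
    {a : A} {Q : Θ₀ᵒᵖ ⥤ Type v} (c : ConeData i₀ T a Q) :
    (nerveOf i₀).obj (T.obj a) ⟶ Q :=
  (c.sigma h₂).app a ≫ { app := fun θ' => ↾(fun F => F (𝟙 a)) }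

lemma ConeData.desc_fac
    (h₂ : Functor.IsLeftKanExtension (T.toFunctor ⋙ nerveOf i₀)
      (𝟙 (i₀ ⋙ T.toFunctor ⋙ nerveOf i₀)))
    {a : A} {Q : Θ₀ᵒᵖ ⥤ Type v} (c : ConeData i₀ T a Q)
    (θ : Θ₀) (f : i₀.obj θ ⟶ a) :
    (nerveOf i₀).map (T.map f) ≫ c.desc h₂ = c.s θ f := by
  apply NatTrans.ext
  funext θ'; apply ConcreteCategory.hom_ext; intro g
  show ((c.sigma h₂).app a).app θ' (g ≫ T.map f) (𝟙 a) = (c.s θ f).app θ' g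
  have hnat := congr_fun (types_congr_hom (congr_app ((c.sigma h₂).naturality f) θ') g) (𝟙 a)
  simp only [NatTrans.comp_app, Functor.comp_obj, Functor.comp_map, types_comp_apply,
    nerveOf_map_app, powerG_map_app, Category.comp_id, c.sigma_app h₂ θ] at hnat
  refine hnat.trans ?_
  show (c.s θ (f ≫ 𝟙 a)).app θ' g = (c.s θ f).app θ' g
  rw [Category.comp_id]

lemma lan_hom_ext
    (h₂ : Functor.IsLeftKanExtension (T.toFunctor ⋙ nerveOf i₀)
      (𝟙 (i₀ ⋙ T.toFunctor ⋙ nerveOf i₀)))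
    {a : A} {Q : Θ₀ᵒᵖ ⥤ Type v}
    (d₁ d₂ : (nerveOf i₀).obj (T.obj a) ⟶ Q)
    (hyp : ∀ (θ : Θ₀) (f : i₀.obj θ ⟶ a),
      (nerveOf i₀).map (T.map f) ≫ d₁ = (nerveOf i₀).map (T.map f) ≫ d₂) :
    d₁ = d₂ := by
  haveI := h₂
  let mk : ((nerveOf i₀).obj (T.obj a) ⟶ Q) → ((T.toFunctor ⋙ nerveOf i₀) ⟶ powerG a Q) :=
    fun d =>
    { app := fun x =>
        { app := fun θ' => ↾(fun u f => d.app θ' (u ≫ T.map f))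
          naturality := by
            intro θ' θ'' w
            apply ConcreteCategory.hom_ext; intro u
            funext f
            have := types_congr_hom (d.naturality w) (u ≫ T.map f)
            have e : (i₀.map w.unop ≫ u) ≫ T.map f = i₀.map w.unop ≫ u ≫ T.map f :=
              Category.assoc _ _ _
            exact (congrArg (fun (y : i₀.obj θ''.unop ⟶ T.obj a) => d.app θ'' y) e).trans this }
      naturality := by
        intro x y w
        apply NatTrans.ext
        funext θ'; apply ConcreteCategory.hom_ext; intro u
        funext f
        show d.app θ' ((u ≫ T.map w) ≫ T.map f) = d.app θ' (u ≫ T.map (w ≫ f))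
        exact congrArg (fun (z : i₀.obj θ'.unop ⟶ T.obj a) => d.app θ' z)
          (by simp only [Functor.map_comp]; exact Category.assoc _ _ _) }
  have hext : mk d₁ = mk d₂ := by
    apply Functor.hom_ext_of_isLeftKanExtension (T.toFunctor ⋙ nerveOf i₀)
      (𝟙 (i₀ ⋙ T.toFunctor ⋙ nerveOf i₀))
    apply NatTrans.ext
    funext θ
    apply NatTrans.ext
    funext θ'; apply ConcreteCategory.hom_ext; intro g
    funext f
    have := types_congr_hom (congr_app (hyp θ f) θ') g
    exact this
  apply NatTrans.ext
  funext θ'; apply ConcreteCategory.hom_ext; intro (u : i₀.obj θ'.unop ⟶ T.obj a)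
  have h1 := types_congr_hom (congr_app (congr_app hext a) θ') u
  have h2 := congr_fun h1 (𝟙 a)
  have e : u ≫ T.map (𝟙 a) = u := (congrArg (fun m => u ≫ m) (T.map_id a)).trans (Category.comp_id u)
  exact (congrArg (fun (z : i₀.obj θ'.unop ⟶ T.obj a) => d₁.app θ' z) e).symm.trans
    (h2.trans (congrArg (fun (z : i₀.obj θ'.unop ⟶ T.obj a) => d₂.app θ' z) e))

lemma joint_surj
    (h₂ : Functor.IsLeftKanExtension (T.toFunctor ⋙ nerveOf i₀)
      (𝟙 (i₀ ⋙ T.toFunctor ⋙ nerveOf i₀)))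
    (x : A) (θ' : Θ₀) (u : i₀.obj θ' ⟶ T.obj x) :
    ∃ (θ : Θ₀) (k : i₀.obj θ ⟶ x) (g : i₀.obj θ' ⟶ T.obj (i₀.obj θ)), u = g ≫ T.map k := by
  let S : Θ₀ᵒᵖ ⥤ Type v :=
    { obj := fun ρ => {w : i₀.obj ρ.unop ⟶ T.obj x //
        ∃ (θ : Θ₀) (k : i₀.obj θ ⟶ x) (g : i₀.obj ρ.unop ⟶ T.obj (i₀.obj θ)), w = g ≫ T.map k}
      map := fun wo => ↾(fun p => ⟨i₀.map wo.unop ≫ p.1, by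
        obtain ⟨θ, k, g, hg⟩ := p.2
        exact ⟨θ, k, i₀.map wo.unop ≫ g, by rw [hg, Category.assoc]⟩⟩)
      map_id := by intro ρ; apply ConcreteCategory.hom_ext; intro p; apply Subtype.ext; simp
      map_comp := by
        intro ρ ρ' ρ'' w w'; apply ConcreteCategory.hom_ext; intro p; apply Subtype.ext; simp }
  let ι : S ⟶ (nerveOf i₀).obj (T.obj x) := { app := fun ρ => ↾(fun p => p.1) }
  let c : ConeData i₀ T x S :=
    { s := fun θ k =>
        { app := fun ρ => ↾(fun g => ⟨g ≫ T.map k, θ, k, g, rfl⟩)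
          naturality := by
            intro ρ ρ' w; apply ConcreteCategory.hom_ext; intro g; apply Subtype.ext
            exact Category.assoc _ _ _ }
      hs := by
        intro θ'' θ w k
        apply NatTrans.ext
        funext ρ; apply ConcreteCategory.hom_ext; intro g
        apply Subtype.ext
        show (g ≫ T.map (i₀.map w)) ≫ T.map k = g ≫ T.map (i₀.map w ≫ k)
        simp only [Functor.map_comp]; exact Category.assoc _ _ _ }
  have hretr : c.desc h₂ ≫ ι = 𝟙 ((nerveOf i₀).obj (T.obj x)) := by
    apply lan_hom_ext h₂
    intro θ k
    rw [← Category.assoc, c.desc_fac h₂ θ k, Category.comp_id]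
    apply NatTrans.ext
    funext ρ; apply ConcreteCategory.hom_ext; intro g
    rfl
  have hu : ((c.desc h₂).app (Opposite.op θ') u).1 = u :=
    types_congr_hom (congr_app hretr (Opposite.op θ')) u
  obtain ⟨θ, k, g, hg⟩ := ((c.desc h₂).app (Opposite.op θ') u).2
  exact ⟨θ, k, g, by rw [← hu, hg]⟩

end Lan


@[simp] lemma theoryRes_obj_obj (Z : (TheoryCat i₀ T)ᵒᵖ ⥤ Type v) (θ : Θ₀ᵒᵖ) :
    ((theoryRes i₀ T).obj Z).obj θ = Z.obj (Opposite.op (toTheory i₀ T θ.unop)) := rfl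

@[simp] lemma theoryRes_obj_map (Z : (TheoryCat i₀ T)ᵒᵖ ⥤ Type v) {ρ ρ' : Θ₀ᵒᵖ} (w : ρ ⟶ ρ') :
    ((theoryRes i₀ T).obj Z).map w = Z.map ((theoryJ i₀ T).map w.unop).op := rfl

/-- Algebra morphism out of a free algebra induced by a plain morphism. -/
def algHomOfGen {M : T.Algebra} {x : A} (q : x ⟶ M.A) : T.free.obj x ⟶ M where
  f := T.map q ≫ M.a
  h := by
    show T.map (T.map q ≫ M.a) ≫ M.a = T.μ.app x ≫ T.map q ≫ M.a
    rw [Functor.map_comp, Category.assoc, ← M.assoc]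
    exact T.μ.naturality_assoc q M.a

@[simp] lemma algHomOfGen_f {M : T.Algebra} {x : A} (q : x ⟶ M.A) :
    (algHomOfGen T q).f = T.map q ≫ M.a := rfl

lemma freeHom_f_eq {M : T.Algebra} {x : A} (F : T.free.obj x ⟶ M) :
    T.map (T.η.app x ≫ F.f) ≫ M.a = F.f := by
  have h1 : T.map (T.η.app x ≫ F.f) = T.map (T.η.app x) ≫ T.map F.f := T.map_comp _ _
  have h2 : T.map F.f ≫ M.a = T.μ.app x ≫ F.f := F.h
  have h3 : T.map (T.η.app x) ≫ T.μ.app x = 𝟙 _ := T.right_unit x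
  exact (congrArg (fun m => m ≫ M.a) h1).trans ((Category.assoc _ _ _).trans
    ((congrArg (fun m => T.map (T.η.app x) ≫ m) h2).trans ((Category.assoc _ _ _).symm.trans
      ((congrArg (fun m => m ≫ F.f) h3).trans (Category.id_comp _)))))

section Backward

variable {i₀ T}
variable (h₂ : Functor.IsLeftKanExtension (T.toFunctor ⋙ nerveOf i₀)
      (𝟙 (i₀ ⋙ T.toFunctor ⋙ nerveOf i₀)))
variable (Z : (TheoryCat i₀ T)ᵒᵖ ⥤ Type v) {a : A}
variable (φ : (nerveOf i₀).obj a ≅ (theoryRes i₀ T).obj Z)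

/-- The presheaf morphism `ν(T i₀ θ) ⟶ ν a` induced by an element `z ∈ Z(θ)`. -/
noncomputable def zeta {θ : Θ₀} (z : Z.obj (Opposite.op (toTheory i₀ T θ))) :
    (nerveOf i₀).obj (T.obj (i₀.obj θ)) ⟶ (nerveOf i₀).obj a where
  app θ' := ↾(fun g => φ.inv.app θ' (Z.map (extHom i₀ T g).op z))
  naturality := by
    intro θ' θ'' w
    apply ConcreteCategory.hom_ext; intro (g : i₀.obj θ'.unop ⟶ T.obj (i₀.obj θ))
    show φ.inv.app θ'' (Z.map (extHom i₀ T (i₀.map w.unop ≫ g)).op z)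
      = i₀.map w.unop ≫ φ.inv.app θ' (Z.map (extHom i₀ T g).op z)
    have h1 := Z.map_comp_apply (extHom i₀ T g).op ((theoryJ i₀ T).map w.unop).op z
    have h2 := NatTrans.naturality_apply φ.inv w (Z.map (extHom i₀ T g).op z)
    exact (congrArg (fun (h : toTheory i₀ T θ''.unop ⟶ toTheory i₀ T θ) =>
      φ.inv.app θ'' (Z.map h.op z)) (extHom_natl i₀ T w.unop g)).trans
      ((congrArg (fun y => φ.inv.app θ'' y) h1).trans h2)

@[simp] lemma zeta_app {θ : Θ₀} (z : Z.obj (Opposite.op (toTheory i₀ T θ)))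
    (θ' : Θ₀ᵒᵖ) (g : i₀.obj θ'.unop ⟶ T.obj (i₀.obj θ)) :
    (zeta Z φ z).app θ' g = φ.inv.app θ' (Z.map (extHom i₀ T g).op z) := rfl

/-- The cocone data assembling the algebra structure map. -/
noncomputable def coneOfPhi : ConeData i₀ T a ((nerveOf i₀).obj a) where
  s θ f := zeta Z φ (φ.hom.app (Opposite.op θ) f)
  hs := by
    intro θ' θ w f
    apply NatTrans.ext
    funext ρ; apply ConcreteCategory.hom_ext; intro (g : i₀.obj ρ.unop ⟶ T.obj (i₀.obj θ'))
    show (zeta Z φ (φ.hom.app (Opposite.op θ) f)).app ρ (g ≫ T.map (i₀.map w))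
      = (zeta Z φ (φ.hom.app (Opposite.op θ') (i₀.map w ≫ f))).app ρ g
    have h1 := Z.map_comp_apply ((theoryJ i₀ T).map w).op (extHom i₀ T g).op
      (φ.hom.app (Opposite.op θ) f)
    have hφ := NatTrans.naturality_apply φ.hom w.op f
    exact (congrArg (fun (h : toTheory i₀ T ρ.unop ⟶ toTheory i₀ T θ) =>
      φ.inv.app ρ (Z.map h.op (φ.hom.app (Opposite.op θ) f))) (extHom_natr i₀ T g w)).trans
      ((congrArg (fun y => φ.inv.app ρ y) h1).trans
        (congrArg (fun y => φ.inv.app ρ (Z.map (extHom i₀ T g).op y)) hφ.symm))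

/-- The algebra structure map `m : T a ⟶ a`. -/
noncomputable def mMap [(nerveOf i₀).Full] : T.obj a ⟶ a :=
  (nerveOf i₀).preimage ((coneOfPhi Z φ).desc h₂)

lemma star [(nerveOf i₀).Full] {θ' θ : Θ₀} (g : i₀.obj θ' ⟶ T.obj (i₀.obj θ))
    (k : i₀.obj θ ⟶ a) :
    (g ≫ T.map k) ≫ mMap h₂ Z φ
      = φ.inv.app (Opposite.op θ') (Z.map (extHom i₀ T g).op (φ.hom.app (Opposite.op θ) k)) := by
  have h1 : (nerveOf i₀).map (T.map k) ≫ (nerveOf i₀).map (mMap h₂ Z φ)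
      = zeta Z φ (φ.hom.app (Opposite.op θ) k) := by
    rw [mMap, Functor.map_preimage]
    exact (coneOfPhi Z φ).desc_fac h₂ θ k
  have := types_congr_hom (congr_app h1 (Opposite.op θ')) g
  exact this


lemma hom_inv_elt (ρ : Θ₀ᵒᵖ) (q : i₀.obj ρ.unop ⟶ a) :
    φ.inv.app ρ (φ.hom.app ρ q) = q := by
  have := types_congr_hom (φ.hom_inv_id_app ρ) q
  exact this

lemma inv_hom_elt (ρ : Θ₀ᵒᵖ) (z : ((theoryRes i₀ T).obj Z).obj ρ) :
    φ.hom.app ρ (φ.inv.app ρ z) = z := by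
  have := types_congr_hom (φ.inv_hom_id_app ρ) z
  exact this

lemma m_unit [(nerveOf i₀).Full] [(nerveOf i₀).Faithful] :
    T.η.app a ≫ mMap h₂ Z φ = 𝟙 a := by
  apply (nerveOf i₀).map_injective
  apply NatTrans.ext
  funext ρ; apply ConcreteCategory.hom_ext; intro (f : i₀.obj ρ.unop ⟶ a)
  have c1 : f ≫ T.η.app a ≫ mMap h₂ Z φ = f := by
    have hη : f ≫ T.η.app a = T.η.app (i₀.obj ρ.unop) ≫ T.map f := by
      have := T.η.naturality f
      exact this
    calc f ≫ T.η.app a ≫ mMap h₂ Z φ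
        = (f ≫ T.η.app a) ≫ mMap h₂ Z φ := by rw [Category.assoc]
      _ = (T.η.app (i₀.obj ρ.unop) ≫ T.map f) ≫ mMap h₂ Z φ := by rw [hη]
      _ = f := (star h₂ Z φ _ f).trans
          ((congrArg (fun (h : toTheory i₀ T ρ.unop ⟶ toTheory i₀ T ρ.unop) =>
            φ.inv.app ρ (Z.map h.op (φ.hom.app ρ f))) (extHom_eta i₀ T ρ.unop)).trans
            ((congrArg (fun y => φ.inv.app ρ y) (Z.map_id_apply _ _)).trans
              (hom_inv_elt Z φ ρ f)))
  exact c1.trans (Category.comp_id _).symm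

lemma m_assoc [(nerveOf i₀).Full] [(nerveOf i₀).Faithful] :
    T.μ.app a ≫ mMap h₂ Z φ = T.map (mMap h₂ Z φ) ≫ mMap h₂ Z φ := by
  apply (nerveOf i₀).map_injective
  apply NatTrans.ext
  funext ρ; apply ConcreteCategory.hom_ext; intro (u : i₀.obj ρ.unop ⟶ T.obj (T.obj a))
  have key : u ≫ T.μ.app a ≫ mMap h₂ Z φ = u ≫ T.map (mMap h₂ Z φ) ≫ mMap h₂ Z φ := by
    obtain ⟨θ, f, g, hu⟩ := joint_surj h₂ (T.obj a) ρ.unop u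
    obtain ⟨θ₂, k, g', hf⟩ := joint_surj h₂ a θ f
    subst hu
    subst hf
    have lhs_eq : (g ≫ T.map (g' ≫ T.map k)) ≫ T.μ.app a ≫ mMap h₂ Z φ
        = ((g ≫ T.map g' ≫ T.μ.app (i₀.obj θ₂)) ≫ T.map k) ≫ mMap h₂ Z φ := by
      rw [Functor.map_comp]
      have hμ : T.map (T.map k) ≫ T.μ.app a = T.μ.app (i₀.obj θ₂) ≫ T.map k :=
        T.μ.naturality k
      slice_lhs 3 4 => rw [hμ]
      simp [Category.assoc]
    have rhs_eq : (g ≫ T.map (g' ≫ T.map k)) ≫ T.map (mMap h₂ Z φ) ≫ mMap h₂ Z φ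
        = (g ≫ T.map ((g' ≫ T.map k) ≫ mMap h₂ Z φ)) ≫ mMap h₂ Z φ := by
      simp [Functor.map_comp, Category.assoc]
    rw [lhs_eq, rhs_eq]
    rw [star h₂ Z φ (g ≫ T.map g' ≫ T.μ.app (i₀.obj θ₂)) k]
    rw [star h₂ Z φ g ((g' ≫ T.map k) ≫ mMap h₂ Z φ)]
    exact (congrArg (fun (h : toTheory i₀ T ρ.unop ⟶ toTheory i₀ T θ₂) =>
      φ.inv.app (Opposite.op ρ.unop) (Z.map h.op (φ.hom.app (Opposite.op θ₂) k)))
        (extHom_comp i₀ T g g')).trans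
      (congrArg (fun y => φ.inv.app (Opposite.op ρ.unop) y)
        ((Z.map_comp_apply (extHom i₀ T g').op (extHom i₀ T g).op _).trans
          (congrArg (fun y => Z.map (extHom i₀ T g).op y)
            ((inv_hom_elt Z φ (Opposite.op θ) _).symm.trans
              (congrArg (fun y => φ.hom.app (Opposite.op θ) y) (star h₂ Z φ g' k).symm)))))
  exact key

/-- The `T`-algebra produced from a presheaf satisfying the Segal condition. -/
noncomputable def segalAlgebra [(nerveOf i₀).Full] [(nerveOf i₀).Faithful] : T.Algebra where
  A := a
  a := mMap h₂ Z φ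
  unit := m_unit h₂ Z φ
  assoc := m_assoc h₂ Z φ


/-- The comparison isomorphism `N_T (segalAlgebra) ≅ Z`. -/
noncomputable def segalIso [(nerveOf i₀).Full] [(nerveOf i₀).Faithful] :
    (theoryNerve i₀ T).obj (segalAlgebra h₂ Z φ) ≅ Z :=
  NatIso.ofComponents
    (fun X =>
      { hom := ↾(fun F => φ.hom.app (Opposite.op (X.unop : Θ₀))
          (T.η.app (i₀.obj (X.unop : Θ₀)) ≫ Monad.Algebra.Hom.f F))
        inv := ↾(fun z => algHomOfGen T (φ.inv.app (Opposite.op (X.unop : Θ₀)) z))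
        hom_inv_id := by
          apply ConcreteCategory.hom_ext; intro F
          show algHomOfGen T (φ.inv.app (Opposite.op (X.unop : Θ₀))
            (φ.hom.app (Opposite.op (X.unop : Θ₀))
              (T.η.app (i₀.obj (X.unop : Θ₀)) ≫ Monad.Algebra.Hom.f F))) = F
          rw [hom_inv_elt Z φ]
          apply Monad.Algebra.Hom.ext
          exact freeHom_f_eq T F
        inv_hom_id := by
          apply ConcreteCategory.hom_ext; intro z
          show φ.hom.app (Opposite.op (X.unop : Θ₀))
            (T.η.app (i₀.obj (X.unop : Θ₀)) ≫
              (T.map (φ.inv.app (Opposite.op (X.unop : Θ₀)) z) ≫ mMap h₂ Z φ)) = z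
          set q := φ.inv.app (Opposite.op (X.unop : Θ₀)) z with hq
          have hnat : T.η.app (i₀.obj (X.unop : Θ₀)) ≫ T.map q = q ≫ T.η.app a := by
            exact (T.η.naturality q).symm
          exact (congrArg (fun (y : i₀.obj (X.unop : Θ₀) ⟶ a) => φ.hom.app (Opposite.op (X.unop : Θ₀)) y)
            (((Category.assoc _ _ _).symm.trans (congrArg (fun m => m ≫ mMap h₂ Z φ) hnat)).trans
              ((Category.assoc _ _ _).trans ((congrArg (fun m => q ≫ m) (m_unit h₂ Z φ)).trans
                (Category.comp_id q))))).trans (inv_hom_elt Z φ _ z) })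
    (by
      intro X Y h
      apply ConcreteCategory.hom_ext; intro F
      show φ.hom.app (Opposite.op (Y.unop : Θ₀))
          (T.η.app (i₀.obj (Y.unop : Θ₀)) ≫ Monad.Algebra.Hom.f
            ((inducedFunctor (fun θ => T.free.obj (i₀.obj θ))).map h.unop ≫ F))
        = Z.map h (φ.hom.app (Opposite.op (X.unop : Θ₀))
            (T.η.app (i₀.obj (X.unop : Θ₀)) ≫ Monad.Algebra.Hom.f F))
      have hF : Monad.Algebra.Hom.f F
          = T.map (T.η.app (i₀.obj (X.unop : Θ₀)) ≫ Monad.Algebra.Hom.f F) ≫ mMap h₂ Z φ :=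
        (freeHom_f_eq T F).symm
      have hcompf : Monad.Algebra.Hom.f
            ((inducedFunctor (fun θ => T.free.obj (i₀.obj θ))).map h.unop ≫ F)
          = Monad.Algebra.Hom.f (InducedCategory.Hom.hom h.unop) ≫ Monad.Algebra.Hom.f F := rfl
      rw [hcompf]
      conv_lhs => rw [hF]
      exact (congrArg (fun y => φ.hom.app (Opposite.op (Y.unop : Θ₀)) y)
        (((Category.assoc _ _ _).symm.trans (Category.assoc _ _ _).symm).trans
          (star h₂ Z φ ((T.η.app (i₀.obj (Y.unop : Θ₀)) ≫
            Monad.Algebra.Hom.f (InducedCategory.Hom.hom h.unop)))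
            (T.η.app (i₀.obj (X.unop : Θ₀)) ≫ Monad.Algebra.Hom.f F)))).trans
        ((inv_hom_elt Z φ _ _).trans
          (congrArg (fun (k : toTheory i₀ T (Y.unop : Θ₀) ⟶ toTheory i₀ T (X.unop : Θ₀)) =>
            Z.map k.op (φ.hom.app (Opposite.op (X.unop : Θ₀))
              (T.η.app (i₀.obj (X.unop : Θ₀)) ≫ Monad.Algebra.Hom.f F)))
            (extHom_eq_self i₀ T h.unop))))

end Backward

/-- The comparison isomorphism for the forward direction. -/
noncomputable def forwardIso (M : T.Algebra) :
    (nerveOf i₀).obj M.A ≅ (theoryRes i₀ T).obj ((theoryNerve i₀ T).obj M) :=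
  NatIso.ofComponents
    (fun ρ =>
      { hom := ↾(fun q => algHomOfGen T q)
        inv := ↾(fun F => T.η.app (i₀.obj ρ.unop) ≫ Monad.Algebra.Hom.f F)
        hom_inv_id := by
          apply ConcreteCategory.hom_ext; intro (q : i₀.obj ρ.unop ⟶ M.A)
          show T.η.app _ ≫ T.map q ≫ M.a = q
          rw [← Category.assoc,
            show T.η.app _ ≫ T.map q = q ≫ T.η.app M.A from (T.η.naturality q).symm,
            Category.assoc, M.unit, Category.comp_id]
        inv_hom_id := by
          apply ConcreteCategory.hom_ext; intro F
          show algHomOfGen T (T.η.app _ ≫ Monad.Algebra.Hom.f F) = F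
          apply Monad.Algebra.Hom.ext
          exact freeHom_f_eq T F })
    (by
      intro ρ ρ' w
      apply ConcreteCategory.hom_ext; intro (q : i₀.obj ρ.unop ⟶ M.A)
      show algHomOfGen T (i₀.map w.unop ≫ q) = T.free.map (i₀.map w.unop) ≫ algHomOfGen T q
      apply Monad.Algebra.Hom.ext
      show T.map (i₀.map w.unop ≫ q) ≫ M.a = T.map (i₀.map w.unop) ≫ T.map q ≫ M.a
      rw [Functor.map_comp, Category.assoc])

end Aux

/-- Weber's nerve theorem, Segal-condition form: for a monad with arities, a presheaf
on the theory `Θ_T` is in the essential image of the nerve `N_T` iff it satisfies the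
generalized Segal condition, i.e. its restriction along `j` is in the essential image
of the nerve of the arities. -/
theorem segal_condition_iff_in_essImage
    (i₀ : Θ₀ ⥤ A) [i₀.Full] [i₀.Faithful] (hd : IsDenseF i₀) [HasColimits A]
    (T : Monad A)
    -- `T` is a left Kan extension of its restriction to the arities
    (h₁ : Functor.IsLeftKanExtension T.toFunctor (𝟙 (i₀ ⋙ T.toFunctor)))
    -- and the nerve of the arities sends it to a left Kan extension
    (h₂ : Functor.IsLeftKanExtension (T.toFunctor ⋙ nerveOf i₀)
      (𝟙 (i₀ ⋙ T.toFunctor ⋙ nerveOf i₀))) :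
    ∀ Z : (TheoryCat i₀ T)ᵒᵖ ⥤ Type v,
      (∃ M : T.Algebra, Nonempty ((theoryNerve i₀ T).obj M ≅ Z)) ↔
      (∃ a : A, Nonempty ((nerveOf i₀).obj a ≅ (theoryRes i₀ T).obj Z)) := by
  intro Z
  constructor
  · rintro ⟨M, ⟨ε⟩⟩
    exact ⟨M.A, ⟨forwardIso i₀ T M ≪≫ (theoryRes i₀ T).mapIso ε⟩⟩
  · rintro ⟨a, ⟨φ⟩⟩
    haveI := hd.1
    haveI := hd.2
    exact ⟨segalAlgebra h₂ Z φ, ⟨segalIso h₂ Z φ⟩⟩
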